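/- If v is an eigenvector of the reduced operator à = U* A U with eigenvalue λ, and φ = X⁺ V Σ⁻¹ v is nonzero, then φ is an eigenvector of A with the same eigenvalue λ, where A = X⁺ V Σ⁻¹ U*. -/
import Mathlib

open Matrix

/-- If `v` is an eigenvector of the reduced operator `Ã = U* A U` with eigenvalue `λ`,
and `φ = X⁺ V Σ⁻¹ v` is nonzero, then `φ` is an eigenvector of `A = X⁺ V Σ⁻¹ U*`
with the same eigenvalue. -/
theorem dmd_mode_is_eigenvector {n m r : ℕ}
    (Xm Xp : Matrix (Fin n) (Fin m) ℂ)
    (U : Matrix (Fin n) (Fin r) ℂ) (V : Matrix (Fin m) (Fin r) ℂ)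
    (σ : Fin r → ℂ) (hσ : ∀ k, σ k ≠ 0)
    (hU : Uᴴ * U = 1) (hV : Vᴴ * V = 1)
    (hSVD : Xm = U * Matrix.diagonal σ * Vᴴ)
    (A : Matrix (Fin n) (Fin n) ℂ)
    (hA : A = Xp * V * (Matrix.diagonal σ)⁻¹ * Uᴴ)
    (Atil : Matrix (Fin r) (Fin r) ℂ) (hAtil : Atil = Uᴴ * A * U)
    (v : Fin r → ℂ) (lam : ℂ) (hv : Atil *ᵥ v = lam • v)
    (φ : Fin n → ℂ) (hφ : φ = (Xp * V * (Matrix.diagonal σ)⁻¹) *ᵥ v)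
    (hφ0 : φ ≠ 0) :
    A *ᵥ φ = lam • φ := by
  set B := Xp * V * (Matrix.diagonal σ)⁻¹ with hB
  have hAtil' : Atil = Uᴴ * B := by
    rw [hAtil, hA]
    rw [← Matrix.mul_assoc, Matrix.mul_assoc (Uᴴ * B), hU, Matrix.mul_one]
  calc A *ᵥ φ = (B * Uᴴ) *ᵥ (B *ᵥ v) := by rw [hA, hφ]
  _ = B *ᵥ (Atil *ᵥ v) := by
      simp [hAtil', Matrix.mulVec_mulVec, Matrix.mul_assoc]
  _ = B *ᵥ (lam • v) := by rw [hv]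
  _ = lam • φ := by rw [Matrix.mulVec_smul, hφ]
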